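/- For every n ≥ 1, LCI_n equals the maximum, over all pairs (ℓ^X, ℓ^Y) ∈ ℕ^m × ℕ^m with ℓ^X_1+…+ℓ^X_m = n and ℓ^Y_1+…+ℓ^Y_m = n, of Σ_{i=1}^m min( #{k : ℓ^X_1+…+ℓ^X_{i−1} < k ≤ ℓ^X_1+…+ℓ^X_i and X_k = i}, #{k : ℓ^Y_1+…+ℓ^Y_{i−1} < k ≤ ℓ^Y_1+…+ℓ^Y_i and Y_k = i} ). -/

import Mathlib

open MeasureTheory ProbabilityTheory Filter Finset Topology

noncomputable section

attribute [local instance] Classical.propDecidable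

/-- Length of the longest common weakly increasing subsequence of `X_0,…,X_{n-1}` and
`Y_0,…,Y_{n-1}`. -/
def LCI (m n : ℕ) (X Y : ℕ → Fin m) : ℕ :=
  sSup {r : ℕ | ∃ i j : Fin r → ℕ, StrictMono i ∧ StrictMono j ∧
    (∀ s, i s < n) ∧ (∀ s, j s < n) ∧
    (∀ s, X (i s) = Y (j s)) ∧ Monotone (X ∘ i) ∧ Monotone (Y ∘ j)}

/-- A downward-closed predicate on `Fin r` holds exactly below its count. -/
lemma lower_iff {r : ℕ} (P : Fin r → Prop) [DecidablePred P]
    (hP : ∀ ⦃s t : Fin r⦄, s ≤ t → P t → P s) (s : Fin r) :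
    P s ↔ (s : ℕ) < (univ.filter P).card := by
  constructor
  · intro hs
    have hsub : Finset.Iic s ⊆ univ.filter P := fun t ht => by
      simp only [mem_filter, mem_univ, true_and]
      exact hP (mem_Iic.mp ht) hs
    have := Finset.card_le_card hsub
    rw [Fin.card_Iic] at this; omega
  · intro hs
    by_contra hns
    have hsub : univ.filter P ⊆ Finset.Iio s := fun t ht => by
      rw [mem_Iio]
      rcases lt_or_ge t s with h | h
      · exact h
      · exact absurd (hP h (mem_filter.mp ht).2) hns
    have := Finset.card_le_card hsub
    rw [Fin.card_Iio] at this; omega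

lemma sm_le {r : ℕ} {i : Fin r → ℕ} (hi : StrictMono i) :
    ∀ k (hk : k < r), k ≤ i ⟨k, hk⟩ := by
  intro k
  induction k with
  | zero => intro _; exact Nat.zero_le _
  | succ k ih =>
    intro hk
    have hk' : k < r := Nat.lt_of_succ_lt hk
    have h1 := ih hk'
    have h2 : i ⟨k, hk'⟩ < i ⟨k + 1, hk⟩ := hi (by simp [Fin.lt_def])
    omega

lemma pref_add_le {m : ℕ} (l : Fin m → ℕ) {a b : Fin m} (hab : a < b) :
    (∑ j ∈ univ.filter (· < a), l j) + l a ≤ ∑ j ∈ univ.filter (· < b), l j := by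
  have hnot : a ∉ univ.filter (· < a) := by simp
  have hsub : insert a (univ.filter (· < a)) ⊆ univ.filter (· < b) := by
    intro x hx
    simp only [mem_insert, mem_filter, mem_univ, true_and] at hx ⊢
    rcases hx with rfl | hx
    · exact hab
    · exact lt_trans hx hab
  calc (∑ j ∈ univ.filter (· < a), l j) + l a
      = ∑ j ∈ insert a (univ.filter (· < a)), l j := by
        rw [Finset.sum_insert hnot]; ring
    _ ≤ _ := Finset.sum_le_sum_of_subset hsub

lemma pref_add_le_sum {m : ℕ} (l : Fin m → ℕ) (a : Fin m) :
    (∑ j ∈ univ.filter (· < a), l j) + l a ≤ ∑ j, l j := by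
  have hnot : a ∉ univ.filter (· < a) := by simp
  calc (∑ j ∈ univ.filter (· < a), l j) + l a
      = ∑ j ∈ insert a (univ.filter (· < a)), l j := by
        rw [Finset.sum_insert hnot]; ring
    _ ≤ _ := Finset.sum_le_sum_of_subset (subset_univ _)

lemma aux_mem (m n : ℕ) (X Y : ℕ → Fin m) (lX lY : Fin m → ℕ)
    (hlX : ∑ i, lX i = n) (hlY : ∑ i, lY i = n) :
    (∑ a : Fin m,
        min
          (((Finset.Ico (∑ j ∈ Finset.univ.filter (· < a), lX j)
              ((∑ j ∈ Finset.univ.filter (· < a), lX j) + lX a)).filter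
            (fun k => X k = a)).card)
          (((Finset.Ico (∑ j ∈ Finset.univ.filter (· < a), lY j)
              ((∑ j ∈ Finset.univ.filter (· < a), lY j) + lY a)).filter
            (fun k => Y k = a)).card)) ∈
    {r : ℕ | ∃ i j : Fin r → ℕ, StrictMono i ∧ StrictMono j ∧
      (∀ s, i s < n) ∧ (∀ s, j s < n) ∧
      (∀ s, X (i s) = Y (j s)) ∧ Monotone (X ∘ i) ∧ Monotone (Y ∘ j)} := by
  classical
  set fX : Fin m → Finset ℕ := fun a =>
    (Finset.Ico (∑ j ∈ Finset.univ.filter (· < a), lX j)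
      ((∑ j ∈ Finset.univ.filter (· < a), lX j) + lX a)).filter (fun k => X k = a) with hfX
  set fY : Fin m → Finset ℕ := fun a =>
    (Finset.Ico (∑ j ∈ Finset.univ.filter (· < a), lY j)
      ((∑ j ∈ Finset.univ.filter (· < a), lY j) + lY a)).filter (fun k => Y k = a) with hfY
  set t : Fin m → ℕ := fun a => min (fX a).card (fY a).card with ht
  set r : ℕ := ∑ a, t a with hr
  -- choose subsets of the right cardinality
  choose TX hTXsub hTXcard using fun a =>
    Finset.exists_subset_card_eq (min_le_left (fX a).card (fY a).card)
  choose TY hTYsub hTYcard using fun a =>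
    Finset.exists_subset_card_eq (min_le_right (fX a).card (fY a).card)
  -- facts about members of TX a / TY a
  have hTXmem : ∀ a, ∀ x ∈ TX a, X x = a ∧
      (∑ j ∈ Finset.univ.filter (· < a), lX j) ≤ x ∧
      x < (∑ j ∈ Finset.univ.filter (· < a), lX j) + lX a := by
    intro a x hx
    have := hTXsub a hx
    rw [hfX] at this
    simp only [mem_filter, mem_Ico] at this
    tauto
  have hTYmem : ∀ a, ∀ x ∈ TY a, Y x = a ∧
      (∑ j ∈ Finset.univ.filter (· < a), lY j) ≤ x ∧
      x < (∑ j ∈ Finset.univ.filter (· < a), lY j) + lY a := by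
    intro a x hx
    have := hTYsub a hx
    rw [hfY] at this
    simp only [mem_filter, mem_Ico] at this
    tauto
  -- blocks with distinct letters are disjoint
  have hdisjX : ∀ x ∈ (univ : Finset (Fin m)), ∀ y ∈ univ, x ≠ y →
      Disjoint (TX x) (TX y) := by
    intro a _ b _ hab
    rw [Finset.disjoint_left]
    intro x hxa hxb
    rcases lt_or_gt_of_ne hab with h | h
    · have h1 := (hTXmem a x hxa).2.2
      have h2 := (hTXmem b x hxb).2.1
      have := pref_add_le lX h
      omega
    · have h1 := (hTXmem b x hxb).2.2
      have h2 := (hTXmem a x hxa).2.1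
      have := pref_add_le lX h
      omega
  have hdisjY : ∀ x ∈ (univ : Finset (Fin m)), ∀ y ∈ univ, x ≠ y →
      Disjoint (TY x) (TY y) := by
    intro a _ b _ hab
    rw [Finset.disjoint_left]
    intro x hxa hxb
    rcases lt_or_gt_of_ne hab with h | h
    · have h1 := (hTYmem a x hxa).2.2
      have h2 := (hTYmem b x hxb).2.1
      have := pref_add_le lY h
      omega
    · have h1 := (hTYmem b x hxb).2.2
      have h2 := (hTYmem a x hxa).2.1
      have := pref_add_le lY h
      omega
  set T : Finset ℕ := univ.biUnion TX with hT
  set U : Finset ℕ := univ.biUnion TY with hU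
  have hTcard : T.card = r := by
    rw [hT, Finset.card_biUnion hdisjX, hr]
    exact Finset.sum_congr rfl fun a _ => hTXcard a
  have hUcard : U.card = r := by
    rw [hU, Finset.card_biUnion hdisjY, hr]
    exact Finset.sum_congr rfl fun a _ => hTYcard a
  set e := T.orderIsoOfFin hTcard with he
  set e' := U.orderIsoOfFin hUcard with he'
  set i : Fin r → ℕ := fun s => (e s : ℕ) with hi
  set j : Fin r → ℕ := fun s => (e' s : ℕ) with hj
  have hiT : ∀ s, i s ∈ T := fun s => (e s).2
  have hjU : ∀ s, j s ∈ U := fun s => (e' s).2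
  have hism : StrictMono i := fun s u h => Subtype.coe_lt_coe.mpr (e.strictMono h)
  have hjsm : StrictMono j := fun s u h => Subtype.coe_lt_coe.mpr (e'.strictMono h)
  -- bounds
  have hin : ∀ s, i s < n := by
    intro s
    obtain ⟨a, _, ha⟩ := Finset.mem_biUnion.mp (hiT s)
    have h1 := (hTXmem a _ ha).2.2
    have h2 := pref_add_le_sum lX a
    omega
  have hjn : ∀ s, j s < n := by
    intro s
    obtain ⟨a, _, ha⟩ := Finset.mem_biUnion.mp (hjU s)
    have h1 := (hTYmem a _ ha).2.2
    have h2 := pref_add_le_sum lY a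
    omega
  -- monotonicity of the letters
  have hmonoX : Monotone (X ∘ i) := by
    intro s u hsu
    obtain ⟨a, _, ha⟩ := Finset.mem_biUnion.mp (hiT s)
    obtain ⟨b, _, hb⟩ := Finset.mem_biUnion.mp (hiT u)
    have hXa := (hTXmem a _ ha).1
    have hXb := (hTXmem b _ hb).1
    simp only [Function.comp_apply, hXa, hXb]
    by_contra hba
    push_neg at hba
    have h1 := (hTXmem a _ ha).2.1
    have h2 := (hTXmem b _ hb).2.2
    have h3 := pref_add_le lX hba
    have h4 : i s ≤ i u := hism.monotone hsu
    omega
  have hmonoY : Monotone (Y ∘ j) := by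
    intro s u hsu
    obtain ⟨a, _, ha⟩ := Finset.mem_biUnion.mp (hjU s)
    obtain ⟨b, _, hb⟩ := Finset.mem_biUnion.mp (hjU u)
    have hYa := (hTYmem a _ ha).1
    have hYb := (hTYmem b _ hb).1
    simp only [Function.comp_apply, hYa, hYb]
    by_contra hba
    push_neg at hba
    have h1 := (hTYmem a _ ha).2.1
    have h2 := (hTYmem b _ hb).2.2
    have h3 := pref_add_le lY hba
    have h4 : j s ≤ j u := hjsm.monotone hsu
    omega
  -- the count of letters ≤ a among the subsequence
  have hcardX : ∀ a : Fin m,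
      (univ.filter (fun s : Fin r => X (i s) ≤ a)).card
        = ∑ b ∈ univ.filter (· ≤ a), t b := by
    intro a
    have hbij : (univ.filter (fun s : Fin r => X (i s) ≤ a)).card
        = (T.filter (fun x => X x ≤ a)).card := by
      apply Finset.card_bij (fun s _ => i s)
      · intro s hs
        simp only [mem_filter, mem_univ, true_and] at hs ⊢
        exact ⟨hiT s, hs⟩
      · intro s _ u _ h
        exact hism.injective h
      · intro x hx
        simp only [mem_filter] at hx
        refine ⟨e.symm ⟨x, hx.1⟩, ?_, ?_⟩
        · simp only [mem_filter, mem_univ, true_and, hi]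
          rw [OrderIso.apply_symm_apply]
          exact hx.2
        · simp only [hi]
          rw [OrderIso.apply_symm_apply]
    rw [hbij, hT, Finset.filter_biUnion, Finset.card_biUnion]
    · rw [Finset.sum_filter]
      have : ∀ b : Fin m, ((TX b).filter (fun x => X x ≤ a)).card
          = if b ≤ a then t b else 0 := by
        intro b
        split_ifs with hba
        · simp only [ht]
          rw [← hTXcard b]
          congr 1
          apply Finset.filter_true_of_mem
          intro x hx
          rw [(hTXmem b x hx).1]
          exact hba
        · rw [Finset.card_eq_zero]
          apply Finset.filter_false_of_mem
          intro x hx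
          rw [(hTXmem b x hx).1]
          exact hba
      exact Finset.sum_congr rfl fun b _ => this b
    · intro x hx y hy hxy
      exact Finset.disjoint_filter_filter (hdisjX x hx y hy hxy)
  have hcardY : ∀ a : Fin m,
      (univ.filter (fun s : Fin r => Y (j s) ≤ a)).card
        = ∑ b ∈ univ.filter (· ≤ a), t b := by
    intro a
    have hbij : (univ.filter (fun s : Fin r => Y (j s) ≤ a)).card
        = (U.filter (fun x => Y x ≤ a)).card := by
      apply Finset.card_bij (fun s _ => j s)
      · intro s hs
        simp only [mem_filter, mem_univ, true_and] at hs ⊢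
        exact ⟨hjU s, hs⟩
      · intro s _ u _ h
        exact hjsm.injective h
      · intro x hx
        simp only [mem_filter] at hx
        refine ⟨e'.symm ⟨x, hx.1⟩, ?_, ?_⟩
        · simp only [mem_filter, mem_univ, true_and, hj]
          rw [OrderIso.apply_symm_apply]
          exact hx.2
        · simp only [hj]
          rw [OrderIso.apply_symm_apply]
    rw [hbij, hU, Finset.filter_biUnion, Finset.card_biUnion]
    · rw [Finset.sum_filter]
      have : ∀ b : Fin m, ((TY b).filter (fun x => Y x ≤ a)).card
          = if b ≤ a then t b else 0 := by
        intro b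
        split_ifs with hba
        · simp only [ht]
          rw [← hTYcard b]
          congr 1
          apply Finset.filter_true_of_mem
          intro x hx
          rw [(hTYmem b x hx).1]
          exact hba
        · rw [Finset.card_eq_zero]
          apply Finset.filter_false_of_mem
          intro x hx
          rw [(hTYmem b x hx).1]
          exact hba
      exact Finset.sum_congr rfl fun b _ => this b
    · intro x hx y hy hxy
      exact Finset.disjoint_filter_filter (hdisjY x hx y hy hxy)
  -- the key "same letter" property
  have hkeyX : ∀ (s : Fin r) (a : Fin m),
      X (i s) ≤ a ↔ (s : ℕ) < ∑ b ∈ univ.filter (· ≤ a), t b := by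
    intro s a
    rw [← hcardX a]
    exact lower_iff (fun s => X (i s) ≤ a)
      (fun s u hsu h => le_trans (hmonoX hsu) h) s
  have hkeyY : ∀ (s : Fin r) (a : Fin m),
      Y (j s) ≤ a ↔ (s : ℕ) < ∑ b ∈ univ.filter (· ≤ a), t b := by
    intro s a
    rw [← hcardY a]
    exact lower_iff (fun s => Y (j s) ≤ a)
      (fun s u hsu h => le_trans (hmonoY hsu) h) s
  have hpair : ∀ s, X (i s) = Y (j s) := by
    intro s
    apply le_antisymm
    · exact (hkeyX s (Y (j s))).mpr ((hkeyY s (Y (j s))).mp le_rfl)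
    · exact (hkeyY s (X (i s))).mpr ((hkeyX s (X (i s))).mp le_rfl)
  exact ⟨i, j, hism, hjsm, hin, hjn, hpair, hmonoX, hmonoY⟩

lemma one_side {m n r : ℕ} (hm : 1 ≤ m) (X : ℕ → Fin m) (i : Fin r → ℕ)
    (hism : StrictMono i) (hin : ∀ s, i s < n) (hmx : Monotone (X ∘ i)) :
    ∃ lX : Fin m → ℕ, (∑ a, lX a = n) ∧ ∀ a : Fin m,
      (univ.filter (fun s : Fin r => X (i s) = a)).card ≤
      ((Finset.Ico (∑ j ∈ Finset.univ.filter (· < a), lX j)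
         ((∑ j ∈ Finset.univ.filter (· < a), lX j) + lX a)).filter
        (fun k => X k = a)).card := by
  classical
  set cnt : ℕ → ℕ :=
    fun a => (univ.filter (fun s : Fin r => ((X (i s)) : ℕ) < a)).card with hcnt
  have hkey : ∀ (s : Fin r) (a : ℕ), ((X (i s)) : ℕ) < a ↔ (s : ℕ) < cnt a := by
    intro s a
    exact lower_iff (fun s => ((X (i s)) : ℕ) < a)
      (fun s t hst h => lt_of_le_of_lt (Fin.le_def.mp (hmx hst)) h) s
  have hcnt_mono : Monotone cnt := by
    intro a b hab
    apply Finset.card_le_card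
    apply Finset.monotone_filter_right
    intro s _ hs
    exact lt_of_lt_of_le hs hab
  set D : ℕ → ℕ := fun a =>
    if a = 0 then 0 else if h : cnt a < r then i ⟨cnt a, h⟩ else n with hD
  have hD0 : D 0 = 0 := by simp [hD]
  have hDle : ∀ a, D a ≤ n := by
    intro a
    simp only [hD]
    split_ifs with h1 h2
    · exact Nat.zero_le n
    · exact le_of_lt (hin _)
    · exact le_rfl
  have hDmono : Monotone D := by
    intro a b hab
    rcases Nat.eq_zero_or_pos a with rfl | ha
    · rw [hD0]; exact Nat.zero_le _
    have hb : b ≠ 0 := by omega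
    have ha' : a ≠ 0 := by omega
    simp only [hD, if_neg ha', if_neg hb]
    by_cases h2 : cnt b < r
    · have h1 : cnt a < r := lt_of_le_of_lt (hcnt_mono hab) h2
      rw [dif_pos h1, dif_pos h2]
      exact hism.monotone (by simpa [Fin.le_def] using hcnt_mono hab)
    · rw [dif_neg h2]
      split_ifs with h1
      · exact le_of_lt (hin _)
      · exact le_rfl
  have hDm : D m = n := by
    have hcm : cnt m = r := by
      have : (univ.filter (fun s : Fin r => ((X (i s)) : ℕ) < m)) = univ := by
        apply Finset.filter_true_of_mem
        intro s _
        exact (X (i s)).isLt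
      simp only [hcnt, this, Finset.card_univ, Fintype.card_fin]
    simp only [hD, hcm]
    rw [if_neg (by omega : m ≠ 0), dif_neg (lt_irrefl r)]
  refine ⟨fun a => D (a.val + 1) - D a.val, ?_, ?_⟩
  · have h1 := Fin.sum_univ_eq_sum_range (fun k => D (k + 1) - D k) m
    rw [h1, Finset.sum_range_tsub hDmono, hDm, hD0]
    omega
  · intro a
    -- prefix sums equal D a.val
    have hpref : (∑ j ∈ univ.filter (· < a), (D (j.val + 1) - D j.val)) = D a.val := by
      have step1 : ∑ j ∈ univ.filter (· < a), (D (j.val + 1) - D j.val)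
          = ∑ k ∈ range m, (if k < a.val then D (k + 1) - D k else 0) := by
        rw [Finset.sum_filter,
          ← Fin.sum_univ_eq_sum_range (fun k => if k < a.val then D (k + 1) - D k else 0) m]
        refine Finset.sum_congr rfl fun j _ => ?_
        simp only [Fin.lt_def]
      rw [step1]
      have step2 : ∑ k ∈ range m, (if k < a.val then D (k + 1) - D k else 0)
          = ∑ k ∈ range a.val, (D (k + 1) - D k) := by
        rw [← Finset.sum_filter]
        congr 1
        ext k
        simp only [Finset.mem_filter, Finset.mem_range]
        constructor
        · intro ⟨_, h⟩; exact h
        · intro h; exact ⟨lt_of_lt_of_le h (Nat.le_of_lt_succ (Nat.lt_succ_of_lt a.isLt)), h⟩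
      rw [step2, Finset.sum_range_tsub hDmono, hD0]
      omega
    -- endpoints
    have hend : D a.val + (D (a.val + 1) - D a.val) = D (a.val + 1) := by
      have := hDmono (by omega : a.val ≤ a.val + 1)
      omega
    -- the injection
    apply Finset.card_le_card_of_injOn (fun s => i s)
    · intro s hs
      simp only [mem_coe, mem_filter, mem_univ, true_and] at hs
      simp only [mem_coe, mem_filter, Finset.mem_Ico, hpref, hend]
      refine ⟨⟨?_, ?_⟩, hs⟩
      · -- D a.val ≤ i s
        rcases Nat.eq_zero_or_pos a.val with h0 | h0
        · rw [h0, hD0]; exact Nat.zero_le _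
        have hnot : ¬ (((X (i s)) : ℕ) < a.val) := by rw [hs]; omega
        rw [hkey s a.val] at hnot
        push_neg at hnot
        have hlt : cnt a.val < r := lt_of_le_of_lt hnot s.isLt
        have : D a.val = i ⟨cnt a.val, hlt⟩ := by
          simp only [hD]
          rw [if_neg (by omega : a.val ≠ 0), dif_pos hlt]
        rw [this]
        exact hism.monotone (by simpa [Fin.le_def] using hnot)
      · -- i s < D (a.val + 1)
        have hlt : ((X (i s)) : ℕ) < a.val + 1 := by rw [hs]; omega
        rw [hkey s (a.val + 1)] at hlt
        by_cases h : cnt (a.val + 1) < r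
        · have : D (a.val + 1) = i ⟨cnt (a.val + 1), h⟩ := by
            simp only [hD]
            rw [if_neg (by omega : a.val + 1 ≠ 0), dif_pos h]
          rw [this]
          exact hism (by simpa [Fin.lt_def] using hlt)
        · have : D (a.val + 1) = n := by
            simp only [hD]
            rw [if_neg (by omega : a.val + 1 ≠ 0), dif_neg h]
          rw [this]
          exact hin s
    · exact fun s _ t _ h => hism.injective h

/-- The representation of `LCI_n` as the maximum, over all pairs of compositions
`(ℓ^X, ℓ^Y)` of `n` into `m` (possibly empty) blocks, of the sum over letters `i` of the
minimum of the number of occurrences of `i` in the `i`-th block of each word. -/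
theorem lci_eq_max_over_blocks (m n : ℕ) (hm : 2 ≤ m) (hn : 1 ≤ n)
    (X Y : ℕ → Fin m) :
    IsGreatest
      {v : ℕ | ∃ lX lY : Fin m → ℕ, (∑ i, lX i = n) ∧ (∑ i, lY i = n) ∧
        v = ∑ i : Fin m,
          min
            (((Finset.Ico (∑ j ∈ Finset.univ.filter (· < i), lX j)
                ((∑ j ∈ Finset.univ.filter (· < i), lX j) + lX i)).filter
              (fun k => X k = i)).card)
            (((Finset.Ico (∑ j ∈ Finset.univ.filter (· < i), lY j)
                ((∑ j ∈ Finset.univ.filter (· < i), lY j) + lY i)).filter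
              (fun k => Y k = i)).card)}
      (LCI m n X Y) := by
  classical
  have hbdd : BddAbove {r : ℕ | ∃ i j : Fin r → ℕ, StrictMono i ∧ StrictMono j ∧
      (∀ s, i s < n) ∧ (∀ s, j s < n) ∧
      (∀ s, X (i s) = Y (j s)) ∧ Monotone (X ∘ i) ∧ Monotone (Y ∘ j)} := by
    refine ⟨n, fun r hr => ?_⟩
    obtain ⟨i, j, hi, hj, hin, hjn, -, -, -⟩ := hr
    rcases Nat.eq_zero_or_pos r with rfl | hr0
    · exact Nat.zero_le n
    · have h1 := sm_le hi (r - 1) (by omega)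
      have h2 := hin ⟨r - 1, by omega⟩
      omega
  have hne : (0 : ℕ) ∈ {r : ℕ | ∃ i j : Fin r → ℕ, StrictMono i ∧ StrictMono j ∧
      (∀ s, i s < n) ∧ (∀ s, j s < n) ∧
      (∀ s, X (i s) = Y (j s)) ∧ Monotone (X ∘ i) ∧ Monotone (Y ∘ j)} :=
    ⟨Fin.elim0, Fin.elim0, fun a _ _ => a.elim0, fun a _ _ => a.elim0,
      fun s => s.elim0, fun s => s.elim0, fun s => s.elim0,
      fun a _ _ => a.elim0, fun a _ _ => a.elim0⟩
  constructor
  · -- LCI is attained by some pair of compositions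
    have hmem : LCI m n X Y ∈ {r : ℕ | ∃ i j : Fin r → ℕ, StrictMono i ∧ StrictMono j ∧
        (∀ s, i s < n) ∧ (∀ s, j s < n) ∧
        (∀ s, X (i s) = Y (j s)) ∧ Monotone (X ∘ i) ∧ Monotone (Y ∘ j)} :=
      Nat.sSup_mem ⟨0, hne⟩ hbdd
    obtain ⟨i, j, hism, hjsm, hin, hjn, hpair, hmx, hmy⟩ := hmem
    obtain ⟨lX, hsX, hcX⟩ := one_side (by omega : 1 ≤ m) X i hism hin hmx
    obtain ⟨lY, hsY, hcY⟩ := one_side (by omega : 1 ≤ m) Y j hjsm hjn hmy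
    refine ⟨lX, lY, hsX, hsY, le_antisymm ?_ ?_⟩
    · -- LCI ≤ the value of this pair of compositions
      have hfib : LCI m n X Y
          = ∑ a : Fin m, (univ.filter (fun s : Fin (LCI m n X Y) => X (i s) = a)).card := by
        have h := Finset.card_eq_sum_card_fiberwise
          (f := fun s : Fin (LCI m n X Y) => X (i s)) (s := univ) (t := univ)
          (fun x _ => mem_univ _)
        simpa using h
      rw [hfib]
      apply Finset.sum_le_sum
      intro a _
      apply le_min
      · exact hcX a
      · have heq : (univ.filter (fun s : Fin (LCI m n X Y) => X (i s) = a))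
            = (univ.filter (fun s => Y (j s) = a)) := by
          ext s
          simp [hpair s]
        rw [heq]
        exact hcY a
    · exact le_csSup hbdd (aux_mem m n X Y lX lY hsX hsY)
  · rintro v ⟨lX, lY, h1, h2, rfl⟩
    exact le_csSup hbdd (aux_mem m n X Y lX lY h1 h2)

end
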